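/- Let (a_{jk})_{j,k=1}^{N} be a matrix of nonnegative reals with all row sums and all column sums equal to 1/N, and let I_j = [(j−1)/N, j/N] ⊂ [0,1]. Then there exists an invertible (bijective up to null sets) Lebesgue-measure-preserving transformation T of [0,1] such that for all j, k: the Lebesgue measure of I_j ∩ T⁻¹(I_k) equals a_{jk}. -/

import Mathlib

open MeasureTheory Filter Topology

/-- Lebesgue measure on `[0,1]`. -/
noncomputable abbrev μ01 : Measure ℝ := volume.restrict (Set.Icc (0 : ℝ) 1)

section Aux

open Set

/-- Disjoint `Ico`s when the first ends before the second begins. -/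
lemma aux_Ico_disjoint {a b c d : ℝ} (h : b ≤ c) :
    Disjoint (Ico a b) (Ico c d) := by
  rw [Set.disjoint_left]
  rintro x ⟨_, hxb⟩ ⟨hxc, _⟩
  exact absurd (lt_of_lt_of_le hxb h) (not_lt.2 hxc)

/-- If `x` belongs to one of a pairwise disjoint family of sets, the sum of indicators
picks out exactly that one. -/
lemma aux_indicator_sum {ι : Type*} [Fintype ι] {J : ι → Set ℝ}
    (hdisj : Pairwise (Function.onFun Disjoint J)) (t : ι → ℝ) {p : ι} {x : ℝ}
    (hx : x ∈ J p) : ∑ q, (J q).indicator (fun _ => t q) x = t p := by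
  rw [Finset.sum_eq_single p]
  · exact Set.indicator_of_mem hx _
  · intro q _ hq
    exact Set.indicator_of_notMem
      (fun hxq => Set.disjoint_left.mp (hdisj hq) hxq hx) _
  · intro h; exact absurd (Finset.mem_univ p) h

/-- Decomposition of the measure of a set `A ⊆ U` along a finite a.e. cover of `U` by
pairwise disjoint measurable sets. -/
lemma aux_decomp {ι : Type*} [Fintype ι] (J : ι → Set ℝ)
    (hmeas : ∀ p, MeasurableSet (J p))
    (hdisj : Pairwise (Function.onFun Disjoint J))
    (U : Set ℝ) (hnull : volume (U \ ⋃ p, J p) = 0)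
    (A : Set ℝ) (hA : MeasurableSet A) (hAU : A ⊆ U) :
    volume A = ∑ p, volume (A ∩ J p) := by
  have hiU : volume (⋃ p, A ∩ J p) = ∑ p, volume (A ∩ J p) := by
    rw [measure_iUnion (fun p q hpq => (hdisj hpq).mono
      (Set.inter_subset_right) (Set.inter_subset_right))
      (fun p => hA.inter (hmeas p))]
    exact tsum_fintype _
  apply le_antisymm
  · calc volume A ≤ volume ((⋃ p, A ∩ J p) ∪ (U \ ⋃ p, J p)) := by
          apply measure_mono
          intro x hx
          by_cases hxJ : x ∈ ⋃ p, J p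
          · obtain ⟨_, ⟨p, rfl⟩, hp⟩ := hxJ
            exact Or.inl (Set.mem_iUnion.2 ⟨p, hx, hp⟩)
          · exact Or.inr ⟨hAU hx, hxJ⟩
      _ ≤ volume (⋃ p, A ∩ J p) + volume (U \ ⋃ p, J p) := measure_union_le _ _
      _ = ∑ p, volume (A ∩ J p) := by rw [hnull, add_zero, hiU]
  · rw [← hiU]
    exact measure_mono (Set.iUnion_subset fun p => Set.inter_subset_left)

/-- The complement in `U` of a finite disjoint family of `Ico`s of total measure
`volume U` is null. -/
lemma aux_cover_null {ι : Type*} [Fintype ι] (J : ι → Set ℝ)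
    (hmeas : ∀ p, MeasurableSet (J p))
    (hdisj : Pairwise (Function.onFun Disjoint J))
    (U : Set ℝ) (hJU : ∀ p, J p ⊆ U) (hUfin : volume U ≠ ⊤)
    (hvol : ∑ p, volume (J p) = volume U) :
    volume (U \ ⋃ p, J p) = 0 := by
  have hsub : (⋃ p, J p) ⊆ U := Set.iUnion_subset hJU
  have hiU : volume (⋃ p, J p) = ∑ p, volume (J p) := by
    rw [measure_iUnion hdisj hmeas]; exact tsum_fintype _
  rw [measure_diff hsub (MeasurableSet.iUnion hmeas).nullMeasurableSet
    (by rw [hiU, hvol]; exact hUfin), hiU, hvol, tsub_self]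

/-- Key set identity: the preimage of `E` under the piecewise translation, intersected with
one of the pieces, is a translate of `E` intersected with the corresponding target piece. -/
lemma aux_key {ι : Type*} [Fintype ι] (c d a : ι → ℝ)
    (hJdisj : Pairwise (Function.onFun Disjoint (fun p => Ico (c p) (c p + a p))))
    (E : Set ℝ) (p : ι) :
    (fun x => x + ∑ q, (Ico (c q) (c q + a q)).indicator (fun _ => d q - c q) x) ⁻¹' E
        ∩ Ico (c p) (c p + a p)
      = (fun x => x + (d p - c p)) ⁻¹' (E ∩ Ico (d p) (d p + a p)) := by
  have hTJ : ∀ x, x ∈ Ico (c p) (c p + a p) →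
      x + ∑ q, (Ico (c q) (c q + a q)).indicator (fun _ => d q - c q) x
        = x + (d p - c p) := fun x hx => by
    rw [aux_indicator_sum hJdisj _ hx]
  ext x
  simp only [Set.mem_inter_iff, Set.mem_preimage, Set.mem_Ico]
  constructor
  · rintro ⟨hxE, h1, h2⟩
    exact ⟨by rw [← hTJ x ⟨h1, h2⟩]; exact hxE, ⟨by linarith, by linarith⟩⟩
  · rintro ⟨hxE, h1, h2⟩
    have hxJ : x ∈ Ico (c p) (c p + a p) := ⟨by linarith, by linarith⟩
    exact ⟨by rw [hTJ x hxJ]; exact hxE, hxJ.1, hxJ.2⟩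

/-- The core interval-exchange lemma: given two finite disjoint families of `Ico`s inside
`[0,1)` with matching lengths of total measure `1`, the piecewise translation defined by
summing indicators is measure preserving for `μ01`. -/
lemma aux_core {ι : Type*} [Fintype ι] (c d a : ι → ℝ)
    (hJdisj : Pairwise (Function.onFun Disjoint (fun p => Ico (c p) (c p + a p))))
    (hDdisj : Pairwise (Function.onFun Disjoint (fun p => Ico (d p) (d p + a p))))
    (hJsub : ∀ p, Ico (c p) (c p + a p) ⊆ Ico (0:ℝ) 1)
    (hDsub : ∀ p, Ico (d p) (d p + a p) ⊆ Ico (0:ℝ) 1)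
    (hsum : ∑ p, volume (Ico (c p) (c p + a p)) = 1) 
    (hsumD : ∑ p, volume (Ico (d p) (d p + a p)) = 1) :
    MeasurePreserving
      (fun x => x + ∑ q, (Ico (c q) (c q + a q)).indicator (fun _ => d q - c q) x)
      μ01 μ01 := by
  set J : ι → Set ℝ := fun p => Ico (c p) (c p + a p) with hJ
  set D : ι → Set ℝ := fun p => Ico (d p) (d p + a p) with hD
  set T : ℝ → ℝ := fun x => x + ∑ q, (J q).indicator (fun _ => d q - c q) x with hT
  have hTmeas : Measurable T := by
    apply measurable_id.add
    exact Finset.measurable_sum _ fun q _ =>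
      (measurable_const.indicator measurableSet_Ico)
  -- On `J p`, `T` is the translation by `d p - c p`.
  have hTJ : ∀ p x, x ∈ J p → T x = x + (d p - c p) := fun p x hx => by
    simp only [hT]; rw [aux_indicator_sum hJdisj _ hx]
  -- key set identity
  have hkey : ∀ (E : Set ℝ) (p : ι),
      T ⁻¹' E ∩ J p = (fun x => x + (d p - c p)) ⁻¹' (E ∩ D p) := by
    intro E p
    ext x
    simp only [Set.mem_inter_iff, Set.mem_preimage, Set.mem_Ico, J, D]
    constructor
    · rintro ⟨hxE, hxJ⟩
      obtain ⟨h1, h2⟩ := hxJ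
      exact ⟨by rw [← hTJ p x ⟨h1, h2⟩]; exact hxE, ⟨by linarith, by linarith⟩⟩
    · rintro ⟨hxE, hxD⟩
      obtain ⟨h1, h2⟩ := hxD
      have hxJ : x ∈ J p := ⟨by linarith, by linarith⟩
      exact ⟨by rw [hTJ p x hxJ]; exact hxE, hxJ⟩
  have hIccfin : volume (Set.Icc (0:ℝ) 1) ≠ ⊤ := by
    rw [Real.volume_Icc]; exact ENNReal.ofReal_ne_top
  have hJIcc : ∀ p, J p ⊆ Set.Icc (0:ℝ) 1 := fun p =>
    (hJsub p).trans Set.Ico_subset_Icc_self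
  have hDIcc : ∀ p, D p ⊆ Set.Icc (0:ℝ) 1 := fun p =>
    (hDsub p).trans Set.Ico_subset_Icc_self
  have hvolIcc : volume (Set.Icc (0:ℝ) 1) = 1 := by
    rw [Real.volume_Icc]; norm_num
  have hJnull : volume (Set.Icc (0:ℝ) 1 \ ⋃ p, J p) = 0 :=
    aux_cover_null J (fun p => measurableSet_Ico) hJdisj _ hJIcc hIccfin
      (by rw [hsum, hvolIcc])
  have hDnull : volume (Set.Icc (0:ℝ) 1 \ ⋃ p, D p) = 0 :=
    aux_cover_null D (fun p => measurableSet_Ico) hDdisj _ hDIcc hIccfin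
      (by rw [hsumD, hvolIcc])
  refine ⟨hTmeas, ?_⟩
  apply Measure.ext
  intro E hE
  rw [Measure.map_apply hTmeas hE, μ01, Measure.restrict_apply (hTmeas hE),
    Measure.restrict_apply hE]
  have hL : volume (T ⁻¹' E ∩ Set.Icc 0 1) = ∑ p, volume (T ⁻¹' E ∩ Set.Icc 0 1 ∩ J p) :=
    aux_decomp J (fun p => measurableSet_Ico) hJdisj _ hJnull _
      ((hTmeas hE).inter measurableSet_Icc) Set.inter_subset_right
  have hR : volume (E ∩ Set.Icc 0 1) = ∑ p, volume (E ∩ Set.Icc 0 1 ∩ D p) :=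
    aux_decomp D (fun p => measurableSet_Ico) hDdisj _ hDnull _
      (hE.inter measurableSet_Icc) Set.inter_subset_right
  rw [hL, hR]
  apply Finset.sum_congr rfl
  intro p _
  have e1 : T ⁻¹' E ∩ Set.Icc 0 1 ∩ J p = T ⁻¹' E ∩ J p := by
    rw [Set.inter_assoc, Set.inter_eq_self_of_subset_right (hJIcc p) ]
  have e2 : E ∩ Set.Icc 0 1 ∩ D p = E ∩ D p := by
    rw [Set.inter_assoc, Set.inter_eq_self_of_subset_right (hDIcc p)]
  rw [e1, e2, hkey E p, measure_preimage_add_right]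

/-- Left endpoint of the `p.2`-th subinterval of the `p.1`-th block, for matrix `b`. -/
noncomputable def auxC (N : ℕ) (b : Fin N → Fin N → ℝ) (p : Fin N × Fin N) : ℝ :=
  (p.1 : ℝ) / N + ∑ l ∈ Finset.Iio p.2, b p.1 l

/-- The `p.2`-th subinterval of the `p.1`-th block, for matrix `b`. -/
noncomputable def auxJ (N : ℕ) (b : Fin N → Fin N → ℝ) (p : Fin N × Fin N) : Set ℝ :=
  Ico (auxC N b p) (auxC N b p + b p.1 p.2)

lemma aux_prefix_le {N : ℕ} (b : Fin N → Fin N → ℝ) (hb : ∀ j k, 0 ≤ b j k)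
    (j : Fin N) {k k' : Fin N} (h : k < k') :
    (∑ l ∈ Finset.Iio k, b j l) + b j k ≤ ∑ l ∈ Finset.Iio k', b j l := by
  have h1 : (∑ l ∈ Finset.Iio k, b j l) + b j k = ∑ l ∈ Finset.Iic k, b j l := by
    rw [← Finset.Iio_insert, Finset.sum_insert (by simp), add_comm]
  rw [h1]
  apply Finset.sum_le_sum_of_subset_of_nonneg
  · intro l hl
    rw [Finset.mem_Iic] at hl
    rw [Finset.mem_Iio]
    exact lt_of_le_of_lt hl h
  · intro l _ _; exact hb j l

lemma aux_prefix_total {N : ℕ} (b : Fin N → Fin N → ℝ) (hb : ∀ j k, 0 ≤ b j k)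
    (j k : Fin N) : (∑ l ∈ Finset.Iio k, b j l) + b j k ≤ ∑ l, b j l := by
  have h1 : (∑ l ∈ Finset.Iio k, b j l) + b j k = ∑ l ∈ Finset.Iic k, b j l := by
    rw [← Finset.Iio_insert, Finset.sum_insert (by simp), add_comm]
  rw [h1]
  apply Finset.sum_le_sum_of_subset_of_nonneg (Finset.subset_univ _)
  intro l _ _; exact hb j l

lemma aux_block_le {N : ℕ} (hN : 0 < N) {j j' : Fin N} (h : j < j') :
    ((j : ℝ) + 1) / N ≤ (j' : ℝ) / N := by
  have hn : (0:ℝ) < N := by exact_mod_cast hN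
  have hj : ((j : ℝ) + 1) ≤ (j' : ℝ) := by
    have : (j : ℕ) + 1 ≤ (j' : ℕ) := h
    exact_mod_cast this
  gcongr

lemma auxJ_subset {N : ℕ} (hN : 0 < N) (b : Fin N → Fin N → ℝ) (hb : ∀ j k, 0 ≤ b j k)
    (hrowb : ∀ j, ∑ k, b j k = 1 / N) (p : Fin N × Fin N) :
    auxJ N b p ⊆ Ico ((p.1 : ℝ) / N) (((p.1 : ℝ) + 1) / N) := by
  have hn : (0:ℝ) < N := by exact_mod_cast hN
  have h1 : (0:ℝ) ≤ ∑ l ∈ Finset.Iio p.2, b p.1 l :=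
    Finset.sum_nonneg fun l _ => hb p.1 l
  have h2 : (∑ l ∈ Finset.Iio p.2, b p.1 l) + b p.1 p.2 ≤ 1 / N := by
    rw [← hrowb p.1]; exact aux_prefix_total b hb p.1 p.2
  intro x hx
  obtain ⟨hx1, hx2⟩ := hx
  constructor
  · calc (p.1 : ℝ) / N ≤ auxC N b p := le_add_of_nonneg_right h1
    _ ≤ x := hx1
  · calc x < auxC N b p + b p.1 p.2 := hx2
    _ ≤ (p.1 : ℝ) / N + 1 / N := by
        unfold auxC; rw [add_assoc]; exact add_le_add (le_refl _) h2
    _ = ((p.1 : ℝ) + 1) / N := by field_simp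

lemma aux_block_sub_unit {N : ℕ} (hN : 0 < N) (j : Fin N) :
    Ico ((j : ℝ) / N) (((j : ℝ) + 1) / N) ⊆ Ico (0:ℝ) 1 := by
  have hn : (0:ℝ) < N := by exact_mod_cast hN
  have hj0 : (0:ℝ) ≤ (j : ℝ) / N := by positivity
  have hj1 : ((j : ℝ) + 1) / N ≤ 1 := by
    rw [div_le_one hn]
    have : (j : ℕ) + 1 ≤ N := j.2
    exact_mod_cast this
  exact Set.Ico_subset_Ico hj0 hj1

lemma auxJ_disj {N : ℕ} (hN : 0 < N) (b : Fin N → Fin N → ℝ) (hb : ∀ j k, 0 ≤ b j k)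
    (hrowb : ∀ j, ∑ k, b j k = 1 / N) :
    Pairwise (Function.onFun Disjoint (auxJ N b)) := by
  have key : ∀ p q : Fin N × Fin N,
      (p.1 < q.1 ∨ (p.1 = q.1 ∧ p.2 < q.2)) → Disjoint (auxJ N b p) (auxJ N b q) := by
    rintro ⟨j, k⟩ ⟨j', k'⟩ (h | ⟨h1, h2⟩)
    · exact (aux_Ico_disjoint (aux_block_le hN h)).mono
        (auxJ_subset hN b hb hrowb _) (auxJ_subset hN b hb hrowb _)
    · simp only at h1 h2
      subst h1
      apply aux_Ico_disjoint
      unfold auxC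
      simp only []
      rw [add_assoc]
      exact add_le_add (le_refl _) (aux_prefix_le b hb j h2)
  intro p q hpq
  rcases lt_trichotomy p.1 q.1 with h | h | h
  · exact key p q (Or.inl h)
  · rcases lt_trichotomy p.2 q.2 with h2 | h2 | h2
    · exact key p q (Or.inr ⟨h, h2⟩)
    · exact absurd (Prod.ext h h2) hpq
    · exact (key q p (Or.inr ⟨h.symm, h2⟩)).symm
  · exact (key q p (Or.inl h)).symm

lemma auxJ_vol {N : ℕ} (b : Fin N → Fin N → ℝ) (hb : ∀ j k, 0 ≤ b j k)
    (p : Fin N × Fin N) : volume (auxJ N b p) = ENNReal.ofReal (b p.1 p.2) := by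
  unfold auxJ
  rw [Real.volume_Ico, add_sub_cancel_left]

lemma auxJ_sum {N : ℕ} (hN : 0 < N) (b : Fin N → Fin N → ℝ) (hb : ∀ j k, 0 ≤ b j k)
    (hrowb : ∀ j, ∑ k, b j k = 1 / N) :
    ∑ p : Fin N × Fin N, volume (auxJ N b p) = 1 := by
  have hn : (0:ℝ) < N := by exact_mod_cast hN
  have h1 : ∑ p : Fin N × Fin N, volume (auxJ N b p)
      = ENNReal.ofReal (∑ p : Fin N × Fin N, b p.1 p.2) := by
    rw [ENNReal.ofReal_sum_of_nonneg fun p _ => hb p.1 p.2]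
    exact Finset.sum_congr rfl fun p _ => auxJ_vol b hb p
  rw [h1]
  have h2 : ∑ p : Fin N × Fin N, b p.1 p.2 = 1 := by
    rw [Fintype.sum_prod_type]
    simp only [hrowb]
    rw [Finset.sum_const, Finset.card_univ, Fintype.card_fin, nsmul_eq_mul]
    field_simp
  rw [h2, ENNReal.ofReal_one]

end Aux

/-- Given a matrix of nonnegative reals with all row and column sums equal to `1/N`, there
is an invertible Lebesgue-measure-preserving transformation `T` of `[0,1]` with
`λ(I_j ∩ T⁻¹ I_k) = a j k` for the intervals `I_j = [j/N, (j+1)/N]`. -/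
theorem exists_invertible_mpt_matching_matrix (N : ℕ) (hN : 0 < N)
    (a : Fin N → Fin N → ℝ) (ha : ∀ j k, 0 ≤ a j k)
    (hrow : ∀ j, ∑ k, a j k = 1 / N) (hcol : ∀ k, ∑ j, a j k = 1 / N) :
    ∃ T S : ℝ → ℝ,
      MeasurePreserving T μ01 μ01 ∧ MeasurePreserving S μ01 μ01 ∧
      (∀ᵐ x ∂μ01, S (T x) = x) ∧ (∀ᵐ x ∂μ01, T (S x) = x) ∧
      ∀ j k : Fin N,
        μ01 (Set.Icc ((j : ℝ) / N) (((j : ℝ) + 1) / N) ∩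
            T ⁻¹' Set.Icc ((k : ℝ) / N) (((k : ℝ) + 1) / N)) =
          ENNReal.ofReal (a j k) := by
  classical
  have hn : (0:ℝ) < N := by exact_mod_cast hN
  set a' : Fin N → Fin N → ℝ := fun k j => a j k with ha'def
  have ha' : ∀ k j, 0 ≤ a' k j := fun k j => ha j k
  set c : Fin N × Fin N → ℝ := fun p => auxC N a p with hcdef
  set d : Fin N × Fin N → ℝ := fun p => auxC N a' p.swap with hddef
  set A : Fin N × Fin N → ℝ := fun p => a p.1 p.2 with hAdef
  have hJeq : ∀ p, Set.Ico (c p) (c p + A p) = auxJ N a p := fun p => rfl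
  have hDeq : ∀ p, Set.Ico (d p) (d p + A p) = auxJ N a' p.swap := fun p => rfl
  -- disjointness
  have hJd : Pairwise (Function.onFun Disjoint (fun p => Set.Ico (c p) (c p + A p))) := by
    intro p q hpq
    simp only [Function.onFun, hJeq]
    exact auxJ_disj hN a ha hrow hpq
  have hDd : Pairwise (Function.onFun Disjoint (fun p => Set.Ico (d p) (d p + A p))) := by
    intro p q hpq
    simp only [Function.onFun, hDeq]
    exact auxJ_disj hN a' ha' hcol fun e => hpq (Prod.swap_injective e)
  -- subsets
  have hJsub : ∀ p, Set.Ico (c p) (c p + A p) ⊆ Set.Ico (0:ℝ) 1 := fun p => by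
    rw [hJeq]
    exact (auxJ_subset hN a ha hrow p).trans (aux_block_sub_unit hN p.1)
  have hDsub : ∀ p, Set.Ico (d p) (d p + A p) ⊆ Set.Ico (0:ℝ) 1 := fun p => by
    rw [hDeq]
    exact (auxJ_subset hN a' ha' hcol p.swap).trans (aux_block_sub_unit hN p.2)
  -- total sums
  have hsumJ : ∑ p : Fin N × Fin N, volume (Set.Ico (c p) (c p + A p)) = 1 := by
    simp only [hJeq]; exact auxJ_sum hN a ha hrow
  have hsumD : ∑ p : Fin N × Fin N, volume (Set.Ico (d p) (d p + A p)) = 1 := by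
    simp only [hDeq]
    rw [Fintype.sum_bijective Prod.swap Prod.swap_bijective _
      (fun q => volume (auxJ N a' q)) (fun x => rfl)]
    exact auxJ_sum hN a' ha' hcol
  -- the transformations
  set T : ℝ → ℝ :=
    fun x => x + ∑ q, (Set.Ico (c q) (c q + A q)).indicator (fun _ => d q - c q) x with hTdef
  set S : ℝ → ℝ :=
    fun x => x + ∑ q, (Set.Ico (d q) (d q + A q)).indicator (fun _ => c q - d q) x with hSdef
  have hTmp : MeasurePreserving T μ01 μ01 :=
    aux_core c d A hJd hDd hJsub hDsub hsumJ hsumD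
  have hSmp : MeasurePreserving S μ01 μ01 :=
    aux_core d c A hDd hJd hDsub hJsub hsumD hsumJ
  -- translation formulas
  have hTx : ∀ p x, x ∈ Set.Ico (c p) (c p + A p) → T x = x + (d p - c p) := fun p x hx => by
    rw [hTdef]; simp only []; rw [aux_indicator_sum hJd _ hx]
  have hSx : ∀ p x, x ∈ Set.Ico (d p) (d p + A p) → S x = x + (c p - d p) := fun p x hx => by
    rw [hSdef]; simp only []; rw [aux_indicator_sum hDd _ hx]
  -- null complements
  have hIccfin : volume (Set.Icc (0:ℝ) 1) ≠ ⊤ := by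
    rw [Real.volume_Icc]; exact ENNReal.ofReal_ne_top
  have hvolIcc : volume (Set.Icc (0:ℝ) 1) = 1 := by rw [Real.volume_Icc]; norm_num
  have hJnull : volume (Set.Icc (0:ℝ) 1 \ ⋃ p, Set.Ico (c p) (c p + A p)) = 0 :=
    aux_cover_null _ (fun p => measurableSet_Ico) hJd _
      (fun p => (hJsub p).trans Set.Ico_subset_Icc_self) hIccfin (by rw [hsumJ, hvolIcc])
  have hDnull : volume (Set.Icc (0:ℝ) 1 \ ⋃ p, Set.Ico (d p) (d p + A p)) = 0 :=
    aux_cover_null _ (fun p => measurableSet_Ico) hDd _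
      (fun p => (hDsub p).trans Set.Ico_subset_Icc_self) hIccfin (by rw [hsumD, hvolIcc])
  -- roundtrip identities on the unions
  have hST : ∀ x, x ∈ (⋃ p, Set.Ico (c p) (c p + A p)) → S (T x) = x := by
    intro x hx
    obtain ⟨_, ⟨p, rfl⟩, hp⟩ := hx
    have h1 : T x = x + (d p - c p) := hTx p x hp
    have h2 : T x ∈ Set.Ico (d p) (d p + A p) := by
      obtain ⟨hl, hr⟩ := hp
      rw [h1]
      exact ⟨by linarith, by linarith⟩
    rw [hSx p (T x) h2, h1]; ring
  have hTS : ∀ x, x ∈ (⋃ p, Set.Ico (d p) (d p + A p)) → T (S x) = x := by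
    intro x hx
    obtain ⟨_, ⟨p, rfl⟩, hp⟩ := hx
    have h1 : S x = x + (c p - d p) := hSx p x hp
    have h2 : S x ∈ Set.Ico (c p) (c p + A p) := by
      obtain ⟨hl, hr⟩ := hp
      rw [h1]
      exact ⟨by linarith, by linarith⟩
    rw [hTx p (S x) h2, h1]; ring
  refine ⟨T, S, hTmp, hSmp, ?_, ?_, ?_⟩
  · rw [ae_iff]
    rw [Measure.restrict_apply' measurableSet_Icc]
    refine measure_mono_null ?_ hJnull
    rintro x ⟨hbad, hIcc⟩
    exact ⟨hIcc, fun hu => hbad (hST x hu)⟩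
  · rw [ae_iff]
    rw [Measure.restrict_apply' measurableSet_Icc]
    refine measure_mono_null ?_ hDnull
    rintro x ⟨hbad, hIcc⟩
    exact ⟨hIcc, fun hu => hbad (hTS x hu)⟩
  -- the matrix condition
  intro j k
  set Ij : Set ℝ := Set.Icc ((j : ℝ) / N) (((j : ℝ) + 1) / N) with hIjdef
  set Ik : Set ℝ := Set.Icc ((k : ℝ) / N) (((k : ℝ) + 1) / N) with hIkdef
  set B : Set ℝ := Ij ∩ T ⁻¹' Ik with hBdef
  have hTmeas : Measurable T := hTmp.measurable
  have hBmeas : MeasurableSet B :=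
    measurableSet_Icc.inter (hTmeas measurableSet_Icc)
  have hIj_sub : Ij ⊆ Set.Icc (0:ℝ) 1 := by
    apply Set.Icc_subset_Icc
    · positivity
    · rw [div_le_one hn]
      have : (j : ℕ) + 1 ≤ N := j.2
      exact_mod_cast this
  have h1 : μ01 B = volume B := by
    rw [Measure.restrict_apply' measurableSet_Icc,
      Set.inter_eq_self_of_subset_left ((Set.inter_subset_left).trans hIj_sub)]
  -- decompose `B` along the row-`j` pieces
  have hJrdisj : Pairwise (Function.onFun Disjoint
      (fun k' : Fin N => Set.Ico (c (j, k')) (c (j, k') + A (j, k')))) := by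
    intro k1 k2 hk
    exact hJd (fun e => hk (congrArg Prod.snd e))
  have hJrU : ∀ k' : Fin N, Set.Ico (c (j, k')) (c (j, k') + A (j, k')) ⊆ Ij := fun k' => by
    rw [hJeq]
    exact (auxJ_subset hN a ha hrow (j, k')).trans Set.Ico_subset_Icc_self
  have hvolIj : volume Ij = ENNReal.ofReal (1 / N) := by
    rw [hIjdef, Real.volume_Icc]
    congr 1
    ring
  have hIjfin : volume Ij ≠ ⊤ := by rw [hvolIj]; exact ENNReal.ofReal_ne_top
  have hsumrow : ∑ k' : Fin N, volume (Set.Ico (c (j, k')) (c (j, k') + A (j, k')))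
      = volume Ij := by
    rw [hvolIj]
    have : ∀ k' : Fin N, volume (Set.Ico (c (j, k')) (c (j, k') + A (j, k')))
        = ENNReal.ofReal (a j k') := fun k' => by
      rw [hJeq]; exact auxJ_vol a ha (j, k')
    simp only [this]
    rw [← ENNReal.ofReal_sum_of_nonneg (fun k' _ => ha j k'), hrow j]
  have hrownull : volume (Ij \ ⋃ k' : Fin N, Set.Ico (c (j, k')) (c (j, k') + A (j, k'))) = 0 :=
    aux_cover_null _ (fun k' => measurableSet_Ico) hJrdisj Ij hJrU hIjfin hsumrow
  have hdecomp : volume B = ∑ k' : Fin N,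
      volume (B ∩ Set.Ico (c (j, k')) (c (j, k') + A (j, k'))) :=
    aux_decomp _ (fun k' => measurableSet_Ico) hJrdisj Ij hrownull B hBmeas
      Set.inter_subset_left
  rw [h1, hdecomp]
  -- compute each term
  have hterm : ∀ k' : Fin N, volume (B ∩ Set.Ico (c (j, k')) (c (j, k') + A (j, k')))
      = volume (Ik ∩ Set.Ico (d (j, k')) (d (j, k') + A (j, k'))) := by
    intro k'
    have e1 : B ∩ Set.Ico (c (j, k')) (c (j, k') + A (j, k'))
        = T ⁻¹' Ik ∩ Set.Ico (c (j, k')) (c (j, k') + A (j, k')) := by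
      rw [hBdef, Set.inter_assoc, Set.inter_comm (T ⁻¹' Ik),
        ← Set.inter_assoc, Set.inter_eq_self_of_subset_right (hJrU k'),
        Set.inter_comm]
    rw [e1, hTdef, aux_key c d A hJd Ik (j, k'), measure_preimage_add_right]
  simp only [hterm]
  -- only the `k' = k` term survives
  have hDsubIk : ∀ k' : Fin N, Set.Ico (d (j, k')) (d (j, k') + A (j, k'))
      ⊆ Set.Ico ((k' : ℝ) / N) (((k' : ℝ) + 1) / N) := fun k' => by
    rw [hDeq]
    exact auxJ_subset hN a' ha' hcol (k', j)
  rw [Finset.sum_eq_single k]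
  · rw [Set.inter_eq_self_of_subset_right ((hDsubIk k).trans Set.Ico_subset_Icc_self),
      hDeq]
    exact auxJ_vol a' ha' (k, j)
  · intro k' _ hk
    refine measure_mono_null ?_ (measure_singleton ((k' : ℝ) / N))
    rintro x ⟨hxI, hxD⟩
    have hD' := hDsubIk k' hxD
    obtain ⟨hd1, hd2⟩ := hD'
    obtain ⟨hi1, hi2⟩ := hxI
    rcases lt_or_gt_of_ne hk with h | h
    · have h2 : ((k' : ℝ) + 1) / N ≤ x := (aux_block_le hN h).trans hi1
      exact absurd hd2 (not_lt.2 h2)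
    · have h2 : ((k : ℝ) + 1) / N ≤ (k' : ℝ) / N := aux_block_le hN h
      have : x = (k' : ℝ) / N := le_antisymm (hi2.trans h2) hd1
      exact this
  · intro h; exact absurd (Finset.mem_univ k) h
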